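/- For random vectors U ∈ ℝ^p, V ∈ ℝ^q with finite first moments, constant vectors a₁ ∈ ℝ^p, a₂ ∈ ℝ^q, nonzero scalars b₁, b₂, and orthogonal matrices C₁ ∈ ℝ^{p×p}, C₂ ∈ ℝ^{q×q}, we have V(a₁ + b₁ C₁ U, a₂ + b₂ C₂ V) = √(|b₁ b₂|) · V(U, V). -/

import Mathlib

open MeasureTheory ProbabilityTheory

/-- Squared distance covariance of two random elements, via the moment formula with
independent copies realized as product measures. -/
noncomputable def dcov2 {Ω E F : Type*} [MeasurableSpace Ω]
    [NormedAddCommGroup E] [NormedAddCommGroup F]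
    (μ : Measure Ω) (U : Ω → E) (V : Ω → F) : ℝ :=
  (∫ ω, ‖U ω.1 - U ω.2‖ * ‖V ω.1 - V ω.2‖ ∂(μ.prod μ))
  + (∫ ω, ‖U ω.1 - U ω.2‖ ∂(μ.prod μ)) * (∫ ω, ‖V ω.1 - V ω.2‖ ∂(μ.prod μ))
  - (∫ ω, ‖U ω.1 - U ω.2.1‖ * ‖V ω.1 - V ω.2.2‖ ∂(μ.prod (μ.prod μ)))
  - (∫ ω, ‖U ω.1 - U ω.2.2‖ * ‖V ω.1 - V ω.2.1‖ ∂(μ.prod (μ.prod μ)))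


noncomputable def dcov {Ω E F : Type*} [MeasurableSpace Ω]
    [NormedAddCommGroup E] [NormedAddCommGroup F]
    (μ : Measure Ω) (U : Ω → E) (V : Ω → F) : ℝ :=
  Real.sqrt (dcov2 μ U V)

private lemma norm_mulVec_orth {n : ℕ} {C : Matrix (Fin n) (Fin n) ℝ}
    (hC : C ∈ Matrix.orthogonalGroup (Fin n) ℝ) (v : EuclideanSpace ℝ (Fin n)) :
    ‖(EuclideanSpace.equiv (Fin n) ℝ).symm (C.mulVec (EuclideanSpace.equiv (Fin n) ℝ v))‖
      = ‖v‖ := by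
  have hC' : star C * C = 1 := (Matrix.mem_orthogonalGroup_iff' _ _).mp hC
  have h1 : (EuclideanSpace.equiv (Fin n) ℝ).symm (C.mulVec (EuclideanSpace.equiv (Fin n) ℝ v))
      = (WithLp.equiv 2 (Fin n → ℝ)).symm (C.mulVec (WithLp.equiv 2 (Fin n → ℝ) v)) := rfl
  rw [h1, @norm_eq_sqrt_re_inner ℝ, @norm_eq_sqrt_re_inner ℝ (EuclideanSpace ℝ (Fin n))]
  congr 1
  show dotProduct (star (C.mulVec (WithLp.equiv 2 (Fin n → ℝ) v))) (C.mulVec (WithLp.equiv 2 (Fin n → ℝ) v)) = inner ℝ v v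
  have h2 : (inner ℝ v v : ℝ)
      = dotProduct (star (WithLp.equiv 2 (Fin n → ℝ) v)) (WithLp.equiv 2 (Fin n → ℝ) v) :=
    EuclideanSpace.inner_eq_star_dotProduct v v
  rw [h2]
  set x := WithLp.equiv 2 (Fin n → ℝ) v
  have hs : star (C.mulVec x) = C.mulVec x := rfl
  rw [hs, Matrix.dotProduct_mulVec, ← Matrix.mulVec_transpose, Matrix.mulVec_mulVec]
  have hT : C.transpose * C = 1 := by
    rw [← Matrix.conjTranspose_eq_transpose_of_trivial]; exact hC'
  rw [hT, Matrix.one_mulVec]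
  rfl

private lemma norm_affine_sub {n : ℕ} {C : Matrix (Fin n) (Fin n) ℝ}
    (hC : C ∈ Matrix.orthogonalGroup (Fin n) ℝ) (a : EuclideanSpace ℝ (Fin n)) (b : ℝ)
    (x y : EuclideanSpace ℝ (Fin n)) :
    ‖(a + b • (EuclideanSpace.equiv (Fin n) ℝ).symm (C.mulVec (EuclideanSpace.equiv (Fin n) ℝ x)))
      - (a + b • (EuclideanSpace.equiv (Fin n) ℝ).symm
          (C.mulVec (EuclideanSpace.equiv (Fin n) ℝ y)))‖
      = |b| * ‖x - y‖ := by
  have h : (a + b • (EuclideanSpace.equiv (Fin n) ℝ).symm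
        (C.mulVec (EuclideanSpace.equiv (Fin n) ℝ x)))
      - (a + b • (EuclideanSpace.equiv (Fin n) ℝ).symm
        (C.mulVec (EuclideanSpace.equiv (Fin n) ℝ y)))
      = b • (EuclideanSpace.equiv (Fin n) ℝ).symm
          (C.mulVec (EuclideanSpace.equiv (Fin n) ℝ (x - y))) := by
    rw [map_sub, Matrix.mulVec_sub, map_sub, smul_sub]
    abel
  rw [h, norm_smul, norm_mulVec_orth hC, Real.norm_eq_abs]

/-- Scaling/invariance property of distance covariance under affine transformations
with orthogonal matrices. -/
theorem dcov_affine {Ω : Type*} [MeasurableSpace Ω] (μ : Measure Ω)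
    [IsProbabilityMeasure μ]
    {p q : ℕ} (U : Ω → EuclideanSpace ℝ (Fin p)) (V : Ω → EuclideanSpace ℝ (Fin q))
    (hU : Measurable U) (hV : Measurable V)
    (hUint : Integrable (fun ω => ‖U ω‖) μ) (hVint : Integrable (fun ω => ‖V ω‖) μ)
    (a₁ : EuclideanSpace ℝ (Fin p)) (a₂ : EuclideanSpace ℝ (Fin q))
    (b₁ b₂ : ℝ) (hb₁ : b₁ ≠ 0) (hb₂ : b₂ ≠ 0)
    (C₁ : Matrix (Fin p) (Fin p) ℝ) (hC₁ : C₁ ∈ Matrix.orthogonalGroup (Fin p) ℝ)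
    (C₂ : Matrix (Fin q) (Fin q) ℝ) (hC₂ : C₂ ∈ Matrix.orthogonalGroup (Fin q) ℝ) :
    dcov μ
      (fun ω => a₁ + b₁ • (EuclideanSpace.equiv (Fin p) ℝ).symm
        (C₁.mulVec (EuclideanSpace.equiv (Fin p) ℝ (U ω))))
      (fun ω => a₂ + b₂ • (EuclideanSpace.equiv (Fin q) ℝ).symm
        (C₂.mulVec (EuclideanSpace.equiv (Fin q) ℝ (V ω))))
      = Real.sqrt |b₁ * b₂| * dcov μ U V := by
  have key : dcov2 μ
      (fun ω => a₁ + b₁ • (EuclideanSpace.equiv (Fin p) ℝ).symm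
        (C₁.mulVec (EuclideanSpace.equiv (Fin p) ℝ (U ω))))
      (fun ω => a₂ + b₂ • (EuclideanSpace.equiv (Fin q) ℝ).symm
        (C₂.mulVec (EuclideanSpace.equiv (Fin q) ℝ (V ω))))
      = |b₁ * b₂| * dcov2 μ U V := by
    unfold dcov2
    simp only [norm_affine_sub hC₁ a₁ b₁, norm_affine_sub hC₂ a₂ b₂]
    have e1 : ∀ ω : Ω × Ω, |b₁| * ‖U ω.1 - U ω.2‖ * (|b₂| * ‖V ω.1 - V ω.2‖)
        = |b₁ * b₂| * (‖U ω.1 - U ω.2‖ * ‖V ω.1 - V ω.2‖) := by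
      intro ω; rw [abs_mul]; ring
    have e2 : ∀ ω : Ω × (Ω × Ω), |b₁| * ‖U ω.1 - U ω.2.1‖ * (|b₂| * ‖V ω.1 - V ω.2.2‖)
        = |b₁ * b₂| * (‖U ω.1 - U ω.2.1‖ * ‖V ω.1 - V ω.2.2‖) := by
      intro ω; rw [abs_mul]; ring
    have e3 : ∀ ω : Ω × (Ω × Ω), |b₁| * ‖U ω.1 - U ω.2.2‖ * (|b₂| * ‖V ω.1 - V ω.2.1‖)
        = |b₁ * b₂| * (‖U ω.1 - U ω.2.2‖ * ‖V ω.1 - V ω.2.1‖) := by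
      intro ω; rw [abs_mul]; ring
    simp only [e1, e2, e3]
    simp only [integral_const_mul]
    rw [abs_mul]
    ring
  unfold dcov
  rw [key, Real.sqrt_mul (abs_nonneg _)]
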